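/- Let $\sigma \subset N_{\mathbb{R}}$ be a strongly convex rational polyhedral cone, let $\Gamma(\sigma)$ be the convex hull of the nonzero lattice points of $\sigma$, and let $\partial_c \Gamma(\sigma)$ be the union of the compact faces of $\Gamma(\sigma)$. Then every lattice point $v$ lying on $\partial_c\Gamma(\sigma)$ is a minimal element of $(\sigma \cap N) \setminus \{0\}$ with respect to the order $\le_\sigma$ defined by $v \le_\sigma v'$ iff $v' - v \in \sigma$. -/

import Mathlib

/-- Every lattice point on the union `∂_cΓ(σ)` of the compact faces of the
convex hull `Γ(σ)` of the nonzero lattice points of a strongly convex rational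
polyhedral cone `σ` is a minimal element of `(σ ∩ N) \ {0}` for the order
`v ≤_σ v'` iff `v' - v ∈ σ`  (terminal valuations are minimal valuations). -/
theorem stmt_9 (n : ℕ) (σ : PointedCone ℝ (Fin n → ℝ))
    (c : (Fin n → ℤ) → (Fin n → ℝ))
    (hc : ∀ v i, c v i = (v i : ℝ))
    (hgen : ∃ S : Finset (Fin n → ℤ), σ = Submodule.span {r : ℝ // 0 ≤ r} (c '' ↑S))
    (hsc : ∀ x : Fin n → ℝ, x ∈ σ → -x ∈ σ → x = 0)
    (Γ : Set (Fin n → ℝ))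
    (hΓ : Γ = convexHull ℝ (c '' {v : Fin n → ℤ | c v ∈ σ ∧ v ≠ 0}))
    (v : Fin n → ℤ) (hvσ : c v ∈ σ) (hv0 : v ≠ 0)
    -- `c v` lies on a compact face of `Γ(σ)`
    (hvF : ∃ F : Set (Fin n → ℝ), IsExtreme ℝ Γ F ∧ IsCompact F ∧ c v ∈ F) :
    ∀ w : Fin n → ℤ, c w ∈ σ → w ≠ 0 → c v - c w ∈ σ → w = v := by
  obtain ⟨F, hF, hFc, hvFmem⟩ := hvF
  intro w hwσ hw0 hsub
  have hcinj : ∀ a b : Fin n → ℤ, c a = c b → a = b := by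
    intro a b h
    funext i
    have := congrFun h i
    rw [hc, hc] at this
    exact_mod_cast this
  by_contra hne
  set u : Fin n → ℤ := v - w with hu_def
  have hcu : c u = c v - c w := by
    funext i
    simp only [hc, hu_def, Pi.sub_apply]
    push_cast
    ring
  have hcu0 : c u ≠ 0 := by
    intro h
    rw [hcu, sub_eq_zero] at h
    exact hne (hcinj w v h.symm)
  have hcuσ : c u ∈ σ := hcu ▸ hsub
  -- smul by nonneg reals stays in σ
  have hsmul : ∀ (t : ℝ), 0 ≤ t → ∀ x ∈ σ, t • x ∈ σ := by
    intro t ht x hx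
    exact σ.smul_mem ht hx
  have hadd : ∀ k : ℕ, c (w + k • u) = c w + (k : ℝ) • c u := by
    intro k
    funext i
    simp only [hc, Pi.add_apply, Pi.smul_apply, nsmul_eq_mul, smul_eq_mul, Pi.mul_apply, Pi.natCast_apply]
    push_cast
    ring
  have hkΓ : ∀ k : ℕ, c w + (k : ℝ) • c u ∈ Γ := by
    intro k
    rw [hΓ]
    apply subset_convexHull
    refine ⟨w + k • u, ⟨?_, ?_⟩, hadd k⟩
    · rw [hadd k]
      exact σ.add_mem hwσ (hsmul _ (by positivity) _ hcuσ)
    · intro h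
      have h2 : c w + (k : ℝ) • c u = 0 := by rw [← hadd k, h]; funext i; simp [hc]
      have hneg : -(c w) ∈ σ := by
        have h3 : (k : ℝ) • c u = -(c w) := eq_neg_of_add_eq_zero_right h2
        rw [← h3]; exact hsmul _ (by positivity) _ hcuσ
      have := hsc _ hwσ hneg
      apply hw0
      apply hcinj
      rw [this]; funext i; simp [hc]
  have hkF : ∀ k : ℕ, 2 ≤ k → c w + (k : ℝ) • c u ∈ F := by
    intro k hk2
    have hkpos : (0 : ℝ) < k := by positivity
    have hx1 : c w ∈ Γ := by
      have := hkΓ 0; simpa using this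
    have hseg : c v ∈ openSegment ℝ (c w) (c w + (k : ℝ) • c u) := by
      refine ⟨1 - 1/k, 1/k, ?_, by positivity, by ring, ?_⟩
      · have : (1:ℝ)/k ≤ 1/2 := by
          apply one_div_le_one_div_of_le <;> [norm_num; exact_mod_cast hk2]
        linarith
      · have hv_eq : c v = c w + c u := by rw [hcu]; abel
        rw [hv_eq]
        have hk0 : (k:ℝ) ≠ 0 := ne_of_gt hkpos
        have hbk : (1/(k:ℝ)) * k = 1 := by field_simp
        rw [smul_add, smul_smul, hbk, one_smul]
        module
    exact (hF.right_mem_of_mem_openSegment hx1 (hkΓ k) hvFmem hseg)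
  -- contradiction with compactness
  obtain ⟨C, hC⟩ := hFc.isBounded.exists_norm_le
  have hcu_pos : 0 < ‖c u‖ := norm_pos_iff.mpr hcu0
  obtain ⟨k, hk⟩ := exists_nat_gt ((C + ‖c w‖) / ‖c u‖ + 2)
  have hC0 : 0 ≤ C := le_trans (norm_nonneg _) (hC _ hvFmem)
  have hfrac : (0:ℝ) ≤ (C + ‖c w‖) / ‖c u‖ :=
    div_nonneg (by positivity) hcu_pos.le
  have hk2 : 2 ≤ k := by
    have : (2:ℝ) ≤ (k:ℝ) := by linarith
    exact_mod_cast this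
  have hle := hC _ (hkF k hk2)
  have h1 : (k:ℝ) * ‖c u‖ ≤ ‖c w + (k:ℝ) • c u‖ + ‖c w‖ := by
    have h4 := norm_sub_le (c w + (k:ℝ) • c u) (c w)
    rw [add_sub_cancel_left, norm_smul, Real.norm_natCast] at h4
    linarith
  have h5 : (C + ‖c w‖) / ‖c u‖ < (k:ℝ) := by linarith
  rw [div_lt_iff₀ hcu_pos] at h5
  linarith
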